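/- Let α and h be real numbers with h > 0, α > 0 and α h² < 4. Then the real 2×2 matrix A = [[1 − α h²/2, h], [α h (α h²/4 − 1), 1 − α h²/2]] has determinant 1, and its (complex) eigenvalues are λ± = ((2 − α h²) ± i h √(4α − α² h²))/2, each of which has complex absolute value exactly 1. -/

import Mathlib

open Matrix Complex

/-- For `h > 0`, `α > 0` with `α h² < 4`, the one-step update matrix
`A = [[1 − α h²/2, h], [α h (α h²/4 − 1), 1 − α h²/2]]` has determinant 1, and its
complex eigenvalues `λ± = ((2 − α h²) ± i h √(4α − α² h²))/2` (i.e. the roots of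
`det(A − λ I) = 0`) both have complex absolute value exactly 1. -/
theorem stmt_1 (α h : ℝ) (hh : 0 < h) (hα : 0 < α) (h4 : α * h ^ 2 < 4) :
    let A : Matrix (Fin 2) (Fin 2) ℝ :=
      !![1 - α * h ^ 2 / 2, h; α * h * (α * h ^ 2 / 4 - 1), 1 - α * h ^ 2 / 2]
    let lamP : ℂ :=
      ((2 - (α : ℂ) * (h : ℂ) ^ 2) +
        Complex.I * (h : ℂ) * (Real.sqrt (4 * α - α ^ 2 * h ^ 2) : ℂ)) / 2
    let lamM : ℂ :=
      ((2 - (α : ℂ) * (h : ℂ) ^ 2) -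
        Complex.I * (h : ℂ) * (Real.sqrt (4 * α - α ^ 2 * h ^ 2) : ℂ)) / 2
    A.det = 1 ∧
      (A.map (Complex.ofReal) - lamP • (1 : Matrix (Fin 2) (Fin 2) ℂ)).det = 0 ∧
      (A.map (Complex.ofReal) - lamM • (1 : Matrix (Fin 2) (Fin 2) ℂ)).det = 0 ∧
      ‖lamP‖ = 1 ∧ ‖lamM‖ = 1 := by
  intro A lamP lamM
  have hnn : (0:ℝ) ≤ 4 * α - α ^ 2 * h ^ 2 := by nlinarith
  have hs : Real.sqrt (4 * α - α ^ 2 * h ^ 2) ^ 2 = 4 * α - α ^ 2 * h ^ 2 :=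
    Real.sq_sqrt hnn
  have hsC : ((Real.sqrt (4 * α - α ^ 2 * h ^ 2)) : ℂ) ^ 2
      = (4 * α - α ^ 2 * h ^ 2 : ℝ) := by
    norm_cast
  set s := Real.sqrt (4 * α - α ^ 2 * h ^ 2) with hsdef
  refine ⟨by simp [A, Matrix.det_fin_two]; ring, ?_, ?_, ?_, ?_⟩
  · show (A.map (Complex.ofReal) - lamP • (1 : Matrix (Fin 2) (Fin 2) ℂ)).det = 0
    simp only [A, lamP, Matrix.det_fin_two, Matrix.map_apply, Matrix.sub_apply,
      Matrix.smul_apply, Matrix.one_apply, Matrix.cons_val', Matrix.cons_val_zero,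
      Matrix.cons_val_one, Matrix.head_cons, Matrix.head_fin_const, Matrix.empty_val',
      Matrix.cons_val_fin_one]
    push_cast
    simp only [Fin.isValue, if_true, if_false, smul_eq_mul, mul_one, mul_zero,
      sub_zero, show (0:Fin 2) ≠ 1 by decide, show (1:Fin 2) ≠ 0 by decide, ite_true, ite_false]
    have hI : (Complex.I)^2 = -1 := Complex.I_sq
    have hsC2 : ((s:ℂ))^2 = 4*(α:ℂ) - (α:ℂ)^2*(h:ℂ)^2 := by
      push_cast at hsC ⊢; linear_combination hsC
    simp only [A, Matrix.cons_val', Matrix.cons_val_zero, Matrix.cons_val_one,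
      Matrix.head_cons, Matrix.empty_val', Matrix.cons_val_fin_one, Matrix.head_fin_const,
      Matrix.of_apply]
    push_cast
    linear_combination ((h:ℂ)^2*(s:ℂ)^2/4) * hI - ((h:ℂ)^2/4) * hsC2
  · show (A.map (Complex.ofReal) - lamM • (1 : Matrix (Fin 2) (Fin 2) ℂ)).det = 0
    simp only [A, lamM, Matrix.det_fin_two, Matrix.map_apply, Matrix.sub_apply,
      Matrix.smul_apply, Matrix.one_apply, Matrix.cons_val', Matrix.cons_val_zero,
      Matrix.cons_val_one, Matrix.head_cons, Matrix.head_fin_const, Matrix.empty_val',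
      Matrix.cons_val_fin_one]
    push_cast
    simp only [Fin.isValue, if_true, if_false, smul_eq_mul, mul_one, mul_zero,
      sub_zero, show (0:Fin 2) ≠ 1 by decide, show (1:Fin 2) ≠ 0 by decide, ite_true, ite_false]
    have hI : (Complex.I)^2 = -1 := Complex.I_sq
    have hsC2 : ((s:ℂ))^2 = 4*(α:ℂ) - (α:ℂ)^2*(h:ℂ)^2 := by
      push_cast at hsC ⊢; linear_combination hsC
    simp only [A, Matrix.cons_val', Matrix.cons_val_zero, Matrix.cons_val_one,
      Matrix.head_cons, Matrix.empty_val', Matrix.cons_val_fin_one, Matrix.head_fin_const,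
      Matrix.of_apply]
    push_cast
    linear_combination ((h:ℂ)^2*(s:ℂ)^2/4) * hI - ((h:ℂ)^2/4) * hsC2
  · have : Complex.normSq lamP = 1 := by
      simp only [lamP]
      rw [Complex.normSq_apply]
      simp [Complex.div_re, Complex.div_im, Complex.normSq_apply, ← Complex.ofReal_pow]
      nlinarith [hs, sq_nonneg s]
    rw [Complex.norm_def, this, Real.sqrt_one]
  · have : Complex.normSq lamM = 1 := by
      simp only [lamM]
      rw [Complex.normSq_apply]
      simp [Complex.div_re, Complex.div_im, Complex.normSq_apply, ← Complex.ofReal_pow]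
      nlinarith [hs, sq_nonneg s]
    rw [Complex.norm_def, this, Real.sqrt_one]
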